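/- For any modal formula A, the following are equivalent: (1) A is a theorem of MNPF; (2) A is valid in all transitive MNP-frames; (3) A is valid in all finite transitive MNP-frames. -/

import Mathlib

/-- Modal formulas: variables, ⊥, →, □. -/
inductive Fml : Type
  | var : ℕ → Fml
  | bot : Fml
  | imp : Fml → Fml → Fml
  | box : Fml → Fml
  deriving DecidableEq

namespace Fml

/-- ¬A is an abbreviation for A → ⊥. -/
def neg (A : Fml) : Fml := imp A bot

/-- ⊤ is an abbreviation for ¬⊥. -/
def top : Fml := neg bot

/-- A ∧ B is an abbreviation for ¬(A → ¬B). -/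
def and (A B : Fml) : Fml := neg (imp A (neg B))

/-- Uniform substitution. -/
def subst (σ : ℕ → Fml) : Fml → Fml
  | var n => σ n
  | bot => bot
  | imp A B => imp (subst σ A) (subst σ B)
  | box A => box (subst σ A)

end Fml

/-- A formula is a propositional tautology if it is true under every valuation
that respects ⊥ and →, treating variables and boxed formulas as atoms. -/
def IsTautology (A : Fml) : Prop :=
  ∀ val : Fml → Bool,
    (val Fml.bot = false) →
    (∀ B C : Fml, val (Fml.imp B C) = (!(val B) || val C)) →
    val A = true

/-- Provability in the extension of the logic MN by the axioms in `Ax`: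
axioms are all propositional tautologies and the members of `Ax`; the rules
are Modus Ponens, Necessitation, and RM. -/
inductive MNProv (Ax : Fml → Prop) : Fml → Prop
  | taut {A : Fml} : IsTautology A → MNProv Ax A
  | ax {A : Fml} : Ax A → MNProv Ax A
  | mp {A B : Fml} : MNProv Ax (A.imp B) → MNProv Ax A → MNProv Ax B
  | nec {A : Fml} : MNProv Ax A → MNProv Ax A.box
  | rm {A B : Fml} : MNProv Ax (A.imp B) → MNProv Ax (A.box.imp B.box)

/-- The axiom P : ¬□⊥. -/
def AxP : Fml → Prop := fun A => A = (Fml.box Fml.bot).neg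

/-- The axiom scheme D : ¬(□B ∧ □¬B). -/
def AxD : Fml → Prop := fun A => ∃ B : Fml, A = ((B.box).and (B.neg.box)).neg

/-- The axiom scheme 4 : □B → □□B. -/
def AxF : Fml → Prop := fun A => ∃ B : Fml, A = B.box.imp B.box.box

def MN : Fml → Prop := MNProv (fun _ => False)
def MNP : Fml → Prop := MNProv AxP
def MND : Fml → Prop := MNProv AxD
def MNF : Fml → Prop := MNProv AxF
def MNPF : Fml → Prop := MNProv (fun A => AxP A ∨ AxF A)
def MNDF : Fml → Prop := MNProv (fun A => AxD A ∨ AxF A)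

/-- An MN-frame: a nonempty set `W` together with a relation between worlds and
nonempty subsets of `W` satisfying monotonicity. -/
structure MNFrame (W : Type*) where
  nonempty : Nonempty W
  rel : W → Set W → Prop
  rel_nonempty : ∀ (x : W) (V : Set W), rel x V → V.Nonempty
  mono : ∀ (x : W) (V U : Set W), rel x V → V ⊆ U → rel x U

/-- `Sat` is a satisfaction relation on the MN-frame `F`. -/
structure IsSat {W : Type*} (F : MNFrame W) (Sat : W → Fml → Prop) : Prop where
  bot : ∀ x : W, ¬ Sat x Fml.bot
  imp : ∀ (x : W) (A B : Fml), Sat x (A.imp B) ↔ (Sat x A → Sat x B)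
  box : ∀ (x : W) (A : Fml), Sat x A.box ↔ ∀ V : Set W, F.rel x V → ∃ y ∈ V, Sat y A

/-- A formula is valid in an MN-frame if it is satisfied at every world under
every satisfaction relation on the frame. -/
def Valid {W : Type*} (F : MNFrame W) (A : Fml) : Prop :=
  ∀ Sat : W → Fml → Prop, IsSat F Sat → ∀ x : W, Sat x A

/-- Transitivity of an MN-frame. -/
def MNFrame.IsTransitive {W : Type*} (F : MNFrame W) : Prop :=
  ∀ (x : W) (V : Set W) (U : W → Set W),
    F.rel x V → (∀ y ∈ V, F.rel y (U y)) → F.rel x (⋃ y ∈ V, U y)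

/-- MNP-frames: every world is related to some subset. -/
def MNFrame.IsMNP {W : Type*} (F : MNFrame W) : Prop :=
  ∀ x : W, ∃ V : Set W, F.rel x V

/-- MND-frames: every world is related to `V` or to its complement. -/
def MNFrame.IsMND {W : Type*} (F : MNFrame W) : Prop :=
  ∀ (x : W) (V : Set W), F.rel x V ∨ F.rel x Vᶜ

namespace Stmt9Aux

open Fml

lemma mnpf_taut {A : Fml} (h : IsTautology A) : MNPF A := MNProv.taut h
lemma mnpf_mp {A B : Fml} (h1 : MNPF (A.imp B)) (h2 : MNPF A) : MNPF B := MNProv.mp h1 h2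
lemma mnpf_rm {A B : Fml} (h : MNPF (A.imp B)) : MNPF (A.box.imp B.box) := MNProv.rm h
lemma mnpf_nec {A : Fml} (h : MNPF A) : MNPF A.box := MNProv.nec h
lemma mnpf_axP : MNPF (Fml.box Fml.bot).neg := MNProv.ax (Or.inl rfl)
lemma mnpf_ax4 (B : Fml) : MNPF (B.box.imp B.box.box) := MNProv.ax (Or.inr ⟨B, rfl⟩)

-- Tautology schemes
lemma t_id (X : Fml) : MNPF (X.imp X) := by
  apply mnpf_taut; intro val hbot himp
  simp only [himp]; cases hX : val X <;> simp

lemma t_trans {X Y Z : Fml} (h1 : MNPF (X.imp Y)) (h2 : MNPF (Y.imp Z)) :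
    MNPF (X.imp Z) := by
  have t : MNPF ((X.imp Y).imp ((Y.imp Z).imp (X.imp Z))) := by
    apply mnpf_taut; intro val hbot himp
    simp only [himp]
    cases hX : val X <;> cases hY : val Y <;> cases hZ : val Z <;> simp
  exact mnpf_mp (mnpf_mp t h1) h2

lemma t_dne {X : Fml} (h : MNPF X.neg.neg) : MNPF X := by
  have t : MNPF (X.neg.neg.imp X) := by
    apply mnpf_taut; intro val hbot himp
    simp only [Fml.neg, himp, hbot]; cases hX : val X <;> simp
  exact mnpf_mp t h

lemma t_andL (X Y : Fml) : MNPF ((X.and Y).imp X) := by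
  apply mnpf_taut; intro val hbot himp
  simp only [Fml.and, Fml.neg, himp, hbot]
  cases hX : val X <;> cases hY : val Y <;> simp

lemma t_andR (X Y : Fml) : MNPF ((X.and Y).imp Y) := by
  apply mnpf_taut; intro val hbot himp
  simp only [Fml.and, Fml.neg, himp, hbot]
  cases hX : val X <;> cases hY : val Y <;> simp

/-- From ¬(X ∧ ¬Y) conclude X → Y. -/
lemma t_negand {X Y : Fml} (h : MNPF (X.and Y.neg).neg) : MNPF (X.imp Y) := by
  have t : MNPF (((X.and Y.neg).neg).imp (X.imp Y)) := by
    apply mnpf_taut; intro val hbot himp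
    simp only [Fml.and, Fml.neg, himp, hbot]
    cases hX : val X <;> cases hY : val Y <;> simp
  exact mnpf_mp t h

/-- From ⊢ ¬χ conclude ⊢ ¬(φ ∧ χ). -/
lemma t_negand_of_R {φ χ : Fml} (h : MNPF χ.neg) : MNPF (φ.and χ).neg := by
  have t : MNPF ((χ.neg).imp ((φ.and χ).neg)) := by
    apply mnpf_taut; intro val hbot himp
    simp only [Fml.and, Fml.neg, himp, hbot]
    cases hX : val φ <;> cases hY : val χ <;> simp
  exact mnpf_mp t h

/-- Splitting: from ⊢ ¬(φ∧B) and ⊢ ¬(φ∧¬B) conclude ⊢ ¬φ. -/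
lemma t_split {φ B : Fml} (h1 : MNPF (φ.and B).neg) (h2 : MNPF (φ.and B.neg).neg) :
    MNPF φ.neg := by
  have t : MNPF (((φ.and B).neg).imp ((((φ.and B.neg).neg)).imp (φ.neg))) := by
    apply mnpf_taut; intro val hbot himp
    simp only [Fml.and, Fml.neg, himp, hbot]
    cases hX : val φ <;> cases hY : val B <;> simp
  exact mnpf_mp (mnpf_mp t h1) h2

/-- Reassociation: from ⊢ ¬(φ∧(B∧χ)) conclude ⊢ ¬((φ∧B)∧χ). -/
lemma t_assoc {φ B χ : Fml} (h : MNPF (φ.and (B.and χ)).neg) :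
    MNPF ((φ.and B).and χ).neg := by
  have t : MNPF (((φ.and (B.and χ)).neg).imp (((φ.and B).and χ).neg)) := by
    apply mnpf_taut; intro val hbot himp
    simp only [Fml.and, Fml.neg, himp, hbot]
    cases hX : val φ <;> cases hY : val B <;> cases hZ : val χ <;> simp
  exact mnpf_mp t h

/-- From ⊢ ¬(φ∧⊤) conclude ⊢ ¬φ. -/
lemma t_top {φ : Fml} (h : MNPF (φ.and Fml.top).neg) : MNPF φ.neg := by
  have t : MNPF (((φ.and Fml.top).neg).imp φ.neg) := by
    apply mnpf_taut; intro val hbot himp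
    simp only [Fml.and, Fml.neg, Fml.top, himp, hbot]
    cases hX : val φ <;> simp
  exact mnpf_mp t h

/-- Gluing: from ⊢ φ→B and ⊢ χ→¬B conclude ⊢ ¬(φ∧χ). -/
lemma t_glue_mem {φ χ B : Fml} (h1 : MNPF (φ.imp B)) (h2 : MNPF (χ.imp B.neg)) :
    MNPF (φ.and χ).neg := by
  have t : MNPF ((φ.imp B).imp ((χ.imp B.neg).imp ((φ.and χ).neg))) := by
    apply mnpf_taut; intro val hbot himp
    simp only [Fml.and, Fml.neg, himp, hbot]
    cases hX : val φ <;> cases hY : val χ <;> cases hZ : val B <;> simp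
  exact mnpf_mp (mnpf_mp t h1) h2

/-- Gluing: from ⊢ φ→¬B and ⊢ χ→B conclude ⊢ ¬(φ∧χ). -/
lemma t_glue_mem2 {φ χ B : Fml} (h1 : MNPF (φ.imp B.neg)) (h2 : MNPF (χ.imp B)) :
    MNPF (φ.and χ).neg := by
  have t : MNPF ((φ.imp B.neg).imp ((χ.imp B).imp ((φ.and χ).neg))) := by
    apply mnpf_taut; intro val hbot himp
    simp only [Fml.and, Fml.neg, himp, hbot]
    cases hX : val φ <;> cases hY : val χ <;> cases hZ : val B <;> simp
  exact mnpf_mp (mnpf_mp t h1) h2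

/-- From ⊢ χ→Y, ⊢ Y→Z, ⊢ χ→¬Z conclude ⊢ ¬χ. -/
lemma t_contra {χ Y Z : Fml} (h1 : MNPF (χ.imp Y)) (h2 : MNPF (Y.imp Z))
    (h3 : MNPF (χ.imp Z.neg)) : MNPF χ.neg := by
  have t : MNPF ((χ.imp Y).imp ((Y.imp Z).imp ((χ.imp Z.neg).imp χ.neg))) := by
    apply mnpf_taut; intro val hbot himp
    simp only [Fml.neg, himp, hbot]
    cases hX : val χ <;> cases hY : val Y <;> cases hZ : val Z <;> simp
  exact mnpf_mp (mnpf_mp (mnpf_mp t h1) h2) h3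

/-- From ⊢ χ→¬Y and ⊢ Y conclude ⊢ ¬χ. -/
lemma t_contra2 {χ Y : Fml} (h1 : MNPF (χ.imp Y.neg)) (h2 : MNPF Y) : MNPF χ.neg := by
  have t : MNPF ((χ.imp Y.neg).imp (Y.imp χ.neg)) := by
    apply mnpf_taut; intro val hbot himp
    simp only [Fml.neg, himp, hbot]
    cases hX : val χ <;> cases hY : val Y <;> simp
  exact mnpf_mp (mnpf_mp t h1) h2

/-- From ⊢ χ→(B→C), ⊢ χ→B, ⊢ χ→¬C conclude ⊢ ¬χ. -/
lemma t_contra3 {χ B C : Fml} (h1 : MNPF (χ.imp (B.imp C))) (h2 : MNPF (χ.imp B))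
    (h3 : MNPF (χ.imp C.neg)) : MNPF χ.neg := by
  have t : MNPF ((χ.imp (B.imp C)).imp ((χ.imp B).imp ((χ.imp C.neg).imp χ.neg))) := by
    apply mnpf_taut; intro val hbot himp
    simp only [Fml.neg, himp, hbot]
    cases hX : val χ <;> cases hY : val B <;> cases hZ : val C <;> simp
  exact mnpf_mp (mnpf_mp (mnpf_mp t h1) h2) h3

end Stmt9Aux
namespace Stmt9Aux

open Fml

/-- The literal of `B` relative to `s`. -/
def lit (s : Finset Fml) (B : Fml) : Fml := if B ∈ s then B else B.neg

/-- Characteristic formula of `s` over the list `l`. -/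
def chi (s : Finset Fml) : List Fml → Fml
  | [] => Fml.top
  | B :: l => (lit s B).and (chi s l)

lemma chi_imp_lit {s : Finset Fml} {B : Fml} {l : List Fml} (hBl : B ∈ l) :
    MNPF ((chi s l).imp (lit s B)) := by
  induction l with
  | nil => cases hBl
  | cons C l ih =>
    rcases List.mem_cons.1 hBl with rfl | h
    · exact t_andL _ _
    · exact t_trans (t_andR _ _) (ih h)

lemma chi_imp_pos {s : Finset Fml} {B : Fml} {l : List Fml} (hBl : B ∈ l) (hBs : B ∈ s) :
    MNPF ((chi s l).imp B) := by
  have := chi_imp_lit (s := s) hBl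
  rwa [lit, if_pos hBs] at this

lemma chi_imp_neg {s : Finset Fml} {B : Fml} {l : List Fml} (hBl : B ∈ l) (hBs : B ∉ s) :
    MNPF ((chi s l).imp B.neg) := by
  have := chi_imp_lit (s := s) hBl
  rwa [lit, if_neg hBs] at this

lemma chi_congr {s s' : Finset Fml} {l : List Fml} (h : ∀ C ∈ l, (C ∈ s ↔ C ∈ s')) :
    chi s l = chi s' l := by
  induction l with
  | nil => rfl
  | cons C l ih =>
    have hC : (C ∈ s) = (C ∈ s') := propext (h C (List.mem_cons_self))
    simp only [chi, lit, hC, ih (fun D hD => h D (List.mem_cons_of_mem _ hD))]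

lemma lindenbaum (φ : Fml) (l : List Fml) (hl : l.Nodup) (h : ¬ MNPF φ.neg) :
    ∃ s : Finset Fml, (∀ x ∈ s, x ∈ l) ∧ ¬ MNPF ((φ.and (chi s l)).neg) := by
  induction l generalizing φ with
  | nil =>
    refine ⟨∅, by simp, fun hc => h ?_⟩
    exact t_top hc
  | cons B l ih =>
    have hBl : B ∉ l := (List.nodup_cons.1 hl).1
    have hl' : l.Nodup := (List.nodup_cons.1 hl).2
    by_cases h1 : MNPF (φ.and B).neg
    · -- then φ ∧ ¬B must be consistent
      have h2 : ¬ MNPF (φ.and B.neg).neg := fun h2 => h (t_split h1 h2)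
      obtain ⟨s, hs, hcon⟩ := ih (φ.and B.neg) hl' h2
      have hBs : B ∉ s := fun hBs => hBl (hs B hBs)
      refine ⟨s, fun x hx => List.mem_cons_of_mem _ (hs x hx), ?_⟩
      have hchi : chi s (B :: l) = B.neg.and (chi s l) := by
        simp only [chi, lit, if_neg hBs]
      rw [hchi]
      intro hc
      exact hcon (t_assoc hc)
    · obtain ⟨s, hs, hcon⟩ := ih (φ.and B) hl' h1
      have hBs : B ∉ s := fun hBs => hBl (hs B hBs)
      refine ⟨insert B s, ?_, ?_⟩
      · intro x hx
        rcases Finset.mem_insert.1 hx with rfl | hx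
        · exact List.mem_cons_self
        · exact List.mem_cons_of_mem _ (hs x hx)
      · have hcongr : chi (insert B s) l = chi s l := by
          apply chi_congr
          intro C hC
          have : C ≠ B := fun hCB => hBl (hCB ▸ hC)
          simp [Finset.mem_insert, this]
        have hchi : chi (insert B s) (B :: l) = B.and (chi s l) := by
          simp only [chi, lit, if_pos (Finset.mem_insert_self B s), hcongr]
        rw [hchi]
        intro hc
        exact hcon (t_assoc hc)

lemma con_of_and {φ χ : Fml} (h : ¬ MNPF (φ.and χ).neg) : ¬ MNPF χ.neg :=
  fun hc => h (t_negand_of_R hc)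

lemma mem_of_con {φ χ B : Fml} {s : Finset Fml} {l : List Fml}
    (hχ : χ = chi s l) (hcon : ¬ MNPF ((φ.and χ).neg)) (hφB : MNPF (φ.imp B))
    (hBl : B ∈ l) : B ∈ s := by
  by_contra hBs
  exact hcon (t_glue_mem hφB (hχ ▸ chi_imp_neg hBl hBs))

lemma not_mem_of_con {φ χ B : Fml} {s : Finset Fml} {l : List Fml}
    (hχ : χ = chi s l) (hcon : ¬ MNPF ((φ.and χ).neg)) (hφB : MNPF (φ.imp B.neg))
    (hBl : B ∈ l) : B ∉ s := by
  intro hBs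
  exact hcon (t_glue_mem2 hφB (hχ ▸ chi_imp_pos hBl hBs))

end Stmt9Aux
namespace Stmt9Aux

open Fml

/-- The set of subformulas. -/
def sub : Fml → Finset Fml
  | .var n => {.var n}
  | .bot => {.bot}
  | .imp B C => insert (.imp B C) (sub B ∪ sub C)
  | .box B => insert (.box B) (sub B)

lemma mem_sub_self (B : Fml) : B ∈ sub B := by
  cases B <;> simp [sub]

lemma sub_closed : ∀ {A C : Fml}, C ∈ sub A → sub C ⊆ sub A := by
  intro A
  induction A with
  | var n => intro C hC; simp [sub] at hC; subst hC; exact fun x hx => hx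
  | bot => intro C hC; simp [sub] at hC; subst hC; exact fun x hx => hx
  | imp B D ihB ihD =>
    intro C hC
    rcases Finset.mem_insert.1 hC with rfl | hC
    · exact fun x hx => hx
    · rcases Finset.mem_union.1 hC with hC | hC
      · exact fun x hx => Finset.mem_insert_of_mem (Finset.mem_union_left _ (ihB hC hx))
      · exact fun x hx => Finset.mem_insert_of_mem (Finset.mem_union_right _ (ihD hC hx))
  | box B ihB =>
    intro C hC
    rcases Finset.mem_insert.1 hC with rfl | hC
    · exact fun x hx => hx
    · exact fun x hx => Finset.mem_insert_of_mem (ihB hC hx)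

lemma imp_mem_sub {A B C : Fml} (h : Fml.imp B C ∈ sub A) : B ∈ sub A ∧ C ∈ sub A :=
  ⟨sub_closed h (by exact Finset.mem_insert_of_mem (Finset.mem_union_left _ (mem_sub_self B))),
   sub_closed h (by exact Finset.mem_insert_of_mem (Finset.mem_union_right _ (mem_sub_self C)))⟩

lemma box_mem_sub {A B : Fml} (h : Fml.box B ∈ sub A) : B ∈ sub A :=
  sub_closed h (Finset.mem_insert_of_mem (mem_sub_self B))

section Canonical

variable (A₀ : Fml)

/-- The finite closure set. -/
noncomputable def LL : List Fml := (sub A₀).toList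

/-- Consistency of a finite set relative to the closure. -/
def Con (s : Finset Fml) : Prop := ¬ MNPF ((chi s (LL A₀)).neg)

/-- Worlds of the canonical model. -/
def World : Type := {s : Finset Fml // s ⊆ sub A₀ ∧ Con A₀ s}

/-- Canonical neighborhood relation. -/
def rel (s : World A₀) (V : Set (World A₀)) : Prop :=
  V.Nonempty ∧ ∀ B : Fml, Fml.box B ∈ sub A₀ → Fml.box B ∈ s.1 →
    (∃ t ∈ V, B ∈ t.1) ∧ (∃ t ∈ V, Fml.box B ∈ t.1)

/-- Canonical satisfaction. -/
def SatC : Fml → World A₀ → Prop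
  | .var n, s => Fml.var n ∈ s.1
  | .bot, _ => False
  | .imp B C, s => SatC B s → SatC C s
  | .box B, s => ∀ V : Set (World A₀), rel A₀ s V → ∃ t ∈ V, SatC B t

variable {A₀}

lemma mem_LL {B : Fml} : B ∈ LL A₀ ↔ B ∈ sub A₀ := Finset.mem_toList

/-- World existence from consistency. -/
lemma exists_world (φ : Fml) (hφ : ¬ MNPF φ.neg) :
    ∃ t : World A₀, ∀ B : Fml, B ∈ sub A₀ →
      (MNPF (φ.imp B) → B ∈ t.1) ∧ (MNPF (φ.imp B.neg) → B ∉ t.1) := by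
  obtain ⟨s, hs, hcon⟩ := lindenbaum φ (LL A₀) (Finset.nodup_toList _) hφ
  refine ⟨⟨s, fun x hx => mem_LL.1 (hs x hx), con_of_and hcon⟩, ?_⟩
  intro B hB
  exact ⟨fun h => mem_of_con rfl hcon h (mem_LL.2 hB),
         fun h => not_mem_of_con rfl hcon h (mem_LL.2 hB)⟩

lemma chi_imp_pos' (s : World A₀) {B : Fml} (hB : B ∈ s.1) :
    MNPF ((chi s.1 (LL A₀)).imp B) :=
  chi_imp_pos (mem_LL.2 (s.2.1 hB)) hB

lemma chi_imp_neg' (s : World A₀) {B : Fml} (hB : B ∈ sub A₀) (hB' : B ∉ s.1) :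
    MNPF ((chi s.1 (LL A₀)).imp B.neg) :=
  chi_imp_neg (mem_LL.2 hB) hB'

/-- ¬⊢ ¬B when □B ∈ s (uses axiom P). -/
lemma con_unbox (s : World A₀) {B : Fml} (hB : Fml.box B ∈ s.1) : ¬ MNPF B.neg := by
  intro h
  apply s.2.2
  -- B.neg is definitionally B.imp bot
  have hrm : MNPF ((Fml.box B).imp (Fml.box Fml.bot)) := mnpf_rm h
  exact t_trans (t_trans (chi_imp_pos' s hB) hrm) mnpf_axP

end Canonical

end Stmt9Aux
namespace Stmt9Aux

open Fml

section Canonical2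

variable {A₀ : Fml}

/-- ¬⊢ ¬¬C when □C ∈ sub A₀ and □C ∉ s (uses Necessitation). -/
lemma con_negC (s : World A₀) {C : Fml} (hC : Fml.box C ∈ sub A₀)
    (hC' : Fml.box C ∉ s.1) : ¬ MNPF C.neg.neg := by
  intro h
  apply s.2.2
  have hC2 : MNPF (Fml.box C) := mnpf_nec (t_dne h)
  exact t_contra2 (chi_imp_neg' s hC hC') hC2

/-- ¬⊢ ¬(B ∧ ¬C) when □B ∈ s, □C ∈ sub A₀ \ s. -/
lemma con_BnC (s : World A₀) {B C : Fml} (hB : Fml.box B ∈ s.1)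
    (hC : Fml.box C ∈ sub A₀) (hC' : Fml.box C ∉ s.1) :
    ¬ MNPF (B.and C.neg).neg := by
  intro h
  apply s.2.2
  have h1 : MNPF (B.imp C) := t_negand h
  exact t_contra (chi_imp_pos' s hB) (mnpf_rm h1) (chi_imp_neg' s hC hC')

/-- ¬⊢ ¬(□B ∧ ¬C) when □B ∈ s, □C ∈ sub A₀ \ s (uses axiom 4). -/
lemma con_boxBnC (s : World A₀) {B C : Fml} (hB : Fml.box B ∈ s.1)
    (hC : Fml.box C ∈ sub A₀) (hC' : Fml.box C ∉ s.1) :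
    ¬ MNPF ((Fml.box B).and C.neg).neg := by
  intro h
  apply s.2.2
  have h1 : MNPF ((Fml.box B).imp C) := t_negand h
  have h2 : MNPF ((Fml.box B).imp (Fml.box C)) :=
    t_trans (mnpf_ax4 B) (mnpf_rm h1)
  exact t_contra (chi_imp_pos' s hB) h2 (chi_imp_neg' s hC hC')

/-- There is a world containing B, when □B ∈ s. -/
lemma world_with (s : World A₀) {B : Fml} (hSg : Fml.box B ∈ sub A₀)
    (hB : Fml.box B ∈ s.1) : ∃ t : World A₀, B ∈ t.1 := by
  obtain ⟨t, ht⟩ := exists_world B (con_unbox s hB)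
  exact ⟨t, (ht B (box_mem_sub hSg)).1 (t_id B)⟩

/-- There is a world avoiding C, when □C ∈ sub A₀ \ s. -/
lemma world_without (s : World A₀) {C : Fml} (hC : Fml.box C ∈ sub A₀)
    (hC' : Fml.box C ∉ s.1) : ∃ t : World A₀, C ∉ t.1 := by
  obtain ⟨t, ht⟩ := exists_world C.neg (con_negC s hC hC')
  exact ⟨t, (ht C (box_mem_sub hC)).2 (t_id C.neg)⟩

/-- There is a world with B and without C. -/
lemma world_with_without (s : World A₀) {B C : Fml} (hSgB : Fml.box B ∈ sub A₀)
    (hB : Fml.box B ∈ s.1) (hC : Fml.box C ∈ sub A₀) (hC' : Fml.box C ∉ s.1) :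
    ∃ t : World A₀, B ∈ t.1 ∧ C ∉ t.1 := by
  obtain ⟨t, ht⟩ := exists_world (B.and C.neg) (con_BnC s hB hC hC')
  exact ⟨t, (ht B (box_mem_sub hSgB)).1 (t_andL _ _),
    (ht C (box_mem_sub hC)).2 (t_andR _ _)⟩

/-- There is a world with □B and without C. -/
lemma world_withbox_without (s : World A₀) {B C : Fml} (hSgB : Fml.box B ∈ sub A₀)
    (hB : Fml.box B ∈ s.1) (hC : Fml.box C ∈ sub A₀) (hC' : Fml.box C ∉ s.1) :
    ∃ t : World A₀, Fml.box B ∈ t.1 ∧ C ∉ t.1 := by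
  obtain ⟨t, ht⟩ := exists_world ((Fml.box B).and C.neg) (con_boxBnC s hB hC hC')
  exact ⟨t, (ht (Fml.box B) hSgB).1 (t_andL _ _),
    (ht C (box_mem_sub hC)).2 (t_andR _ _)⟩

/-- The canonical frame. -/
noncomputable def frame (hne : Nonempty (World A₀)) : MNFrame (World A₀) where
  nonempty := hne
  rel := rel A₀
  rel_nonempty := fun _ _ h => h.1
  mono := by
    rintro s V U ⟨⟨t, ht⟩, h2⟩ hVU
    refine ⟨⟨t, hVU ht⟩, fun B hSg hs => ?_⟩
    obtain ⟨⟨t1, ht1, hm1⟩, ⟨t2, ht2, hm2⟩⟩ := h2 B hSg hs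
    exact ⟨⟨t1, hVU ht1, hm1⟩, ⟨t2, hVU ht2, hm2⟩⟩

lemma frame_trans (hne : Nonempty (World A₀)) : (frame hne).IsTransitive := by
  rintro s V U ⟨⟨t0, ht0⟩, h2⟩ hU
  constructor
  · obtain ⟨u, hu⟩ := (hU t0 ht0).1
    exact ⟨u, Set.mem_biUnion ht0 hu⟩
  · intro B hSg hs
    obtain ⟨⟨t1, ht1, hm1⟩, ⟨t2, ht2, hm2⟩⟩ := h2 B hSg hs
    obtain ⟨⟨u1, hu1, hmu1⟩, _⟩ := (hU t2 ht2).2 B hSg hm2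
    obtain ⟨_, ⟨u2, hu2, hmu2⟩⟩ := (hU t2 ht2).2 B hSg hm2
    exact ⟨⟨u1, Set.mem_biUnion ht2 hu1, hmu1⟩, ⟨u2, Set.mem_biUnion ht2 hu2, hmu2⟩⟩

lemma frame_mnp (hne : Nonempty (World A₀)) : (frame hne).IsMNP := by
  intro s
  refine ⟨Set.univ, ⟨⟨s, trivial⟩, fun B hSg hs => ?_⟩⟩
  obtain ⟨t, ht⟩ := world_with s hSg hs
  exact ⟨⟨t, trivial, ht⟩, ⟨s, trivial, hs⟩⟩

lemma isSat (hne : Nonempty (World A₀)) :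
    IsSat (frame hne) (fun s B => SatC A₀ B s) where
  bot := fun _ h => h
  imp := fun _ _ _ => Iff.rfl
  box := fun _ _ => Iff.rfl

/-- Truth lemma. -/
lemma truth : ∀ B : Fml, B ∈ sub A₀ → ∀ s : World A₀, SatC A₀ B s ↔ B ∈ s.1 := by
  intro B
  induction B with
  | var n => intro _ s; exact Iff.rfl
  | bot =>
    intro _ s
    simp only [SatC, false_iff]
    intro hb
    exact s.2.2 (chi_imp_pos' s hb)
  | imp B C ihB ihC =>
    intro hSg s
    obtain ⟨hSgB, hSgC⟩ := imp_mem_sub hSg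
    simp only [SatC]
    rw [ihB hSgB s, ihC hSgC s]
    constructor
    · intro h
      by_contra hmem
      by_cases hB : B ∈ s.1
      · exact s.2.2 (t_contra (chi_imp_pos' s (h hB)) (mnpf_taut (by
          intro val hbot himp
          simp only [himp]
          cases hC : val C <;> cases hB2 : val B <;> simp)) (chi_imp_neg' s hSg hmem))
      · exact s.2.2 (t_contra (chi_imp_neg' s hSgB hB) (mnpf_taut (by
          intro val hbot himp
          simp only [Fml.neg, himp, hbot]
          cases hC : val C <;> cases hB2 : val B <;> simp)) (chi_imp_neg' s hSg hmem))
    · intro hmem hB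
      by_contra hC
      exact s.2.2 (t_contra3 (chi_imp_pos' s hmem) (chi_imp_pos' s hB)
        (chi_imp_neg' s hSgC hC))
  | box B ihB =>
    intro hSg s
    have hSgB : B ∈ sub A₀ := box_mem_sub hSg
    simp only [SatC]
    constructor
    · intro h
      by_contra hmem
      -- the neighborhood of worlds without B
      have hrel : rel A₀ s {t : World A₀ | B ∉ t.1} := by
        constructor
        · obtain ⟨t, ht⟩ := world_without s hSg hmem
          exact ⟨t, ht⟩
        · intro B' hSg' hs'
          obtain ⟨t1, ht1, ht1'⟩ := world_with_without s hSg' hs' hSg hmem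
          obtain ⟨t2, ht2, ht2'⟩ := world_withbox_without s hSg' hs' hSg hmem
          exact ⟨⟨t1, ht1', ht1⟩, ⟨t2, ht2', ht2⟩⟩
      obtain ⟨t, ht, ht'⟩ := h _ hrel
      exact ht ((ihB hSgB t).1 ht')
    · intro hmem V hV
      obtain ⟨t, ht, htB⟩ := (hV.2 B hSg hmem).1
      exact ⟨t, ht, (ihB hSgB t).2 htB⟩

end Canonical2

end Stmt9Aux
namespace Stmt9Aux

open Fml

instance worldFinite (A₀ : Fml) : Finite (World A₀) := by
  have : Function.Injective
      (fun x : World A₀ => (⟨x.1, Finset.mem_powerset.2 x.2.1⟩ :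
        {t : Finset Fml // t ∈ (sub A₀).powerset})) := by
    intro x y h
    have h2 := congrArg Subtype.val h
    simp only at h2
    exact Subtype.ext h2
  exact Finite.of_injective _ this

lemma completeness {A : Fml} (h0 : ¬ MNPF A) :
    ¬ (∀ (W : Type) (F : MNFrame W), Finite W → F.IsTransitive → F.IsMNP → Valid F A) := by
  intro hval
  have hcon : ¬ MNPF A.neg.neg := fun h => h0 (t_dne h)
  obtain ⟨s₀, hs₀⟩ := exists_world (A₀ := A) A.neg hcon
  have hA : A ∉ s₀.1 := (hs₀ A (mem_sub_self A)).2 (t_id A.neg)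
  have hne : Nonempty (World A) := ⟨s₀⟩
  have := hval (World A) (frame hne) (worldFinite A) (frame_trans hne) (frame_mnp hne)
    (fun s B => SatC A B s) (isSat hne) s₀
  exact hA ((truth A (mem_sub_self A) s₀).1 this)

lemma soundness {A : Fml} (h : MNPF A) :
    ∀ (W : Type) (F : MNFrame W), F.IsTransitive → F.IsMNP → Valid F A := by
  induction h with
  | @taut A h =>
    intro W F _ _ Sat hS x
    classical
    set val : Fml → Bool := fun B => if Sat x B then true else false with hval
    have h1 : val Fml.bot = false := by simp [hval, hS.bot x]
    have h2 : ∀ B C : Fml, val (Fml.imp B C) = (!(val B) || val C) := by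
      intro B C
      by_cases hb : Sat x B <;> by_cases hc : Sat x C <;>
        simp [hval, hb, hc, hS.imp x B C]
    have := h val h1 h2
    by_contra hx
    simp [hval, hx] at this
  | @ax A h =>
    rcases h with h | ⟨B, rfl⟩
    · rw [h]
      intro W F ht hp Sat hS x
      rw [Fml.neg, hS.imp x _ _]
      intro hbox
      obtain ⟨V, hV⟩ := hp x
      obtain ⟨y, _, hb⟩ := (hS.box x Fml.bot).1 hbox V hV
      exact (hS.bot y hb).elim
    · intro W F ht hp Sat hS x
      rw [hS.imp x _ _]
      intro h1
      rw [hS.box x _]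
      intro V hV
      by_contra hno
      push_neg at hno
      have hU : ∀ y : W, ∃ U : Set W, y ∈ V → (F.rel y U ∧ ∀ z ∈ U, ¬ Sat z B) := by
        intro y
        by_cases hy : y ∈ V
        · have := hno y hy
          rw [hS.box y B] at this
          push_neg at this
          obtain ⟨U, hU1, hU2⟩ := this
          exact ⟨U, fun _ => ⟨hU1, fun z hz => hU2 z hz⟩⟩
        · exact ⟨∅, fun h => absurd h hy⟩
      choose U hU using hU
      have hrel := ht x V U hV (fun y hy => (hU y hy).1)
      obtain ⟨z, hz, hzB⟩ := (hS.box x B).1 h1 _ hrel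
      rw [Set.mem_iUnion₂] at hz
      obtain ⟨y, hy, hzy⟩ := hz
      exact (hU y hy).2 z hzy hzB
  | mp h1 h2 ih1 ih2 =>
    intro W F ht hp Sat hS x
    exact (hS.imp x _ _).1 (ih1 W F ht hp Sat hS x) (ih2 W F ht hp Sat hS x)
  | nec h ih =>
    intro W F ht hp Sat hS x
    rw [hS.box x _]
    intro V hV
    obtain ⟨y, hy⟩ := F.rel_nonempty x V hV
    exact ⟨y, hy, ih W F ht hp Sat hS y⟩
  | rm h ih =>
    intro W F ht hp Sat hS x
    rw [hS.imp x _ _]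
    intro h1
    rw [hS.box x _]
    intro V hV
    obtain ⟨y, hy, hA⟩ := (hS.box x _).1 h1 V hV
    exact ⟨y, hy, (hS.imp y _ _).1 (ih W F ht hp Sat hS y) hA⟩

end Stmt9Aux
/-- A formula is a theorem of MNPF iff it is valid in all transitive
MNP-frames iff it is valid in all finite transitive MNP-frames. -/
theorem stmt9 (A : Fml) :
    (MNPF A ↔ ∀ (W : Type) (F : MNFrame W), F.IsTransitive → F.IsMNP → Valid F A) ∧
    (MNPF A ↔ ∀ (W : Type) (F : MNFrame W), Finite W → F.IsTransitive → F.IsMNP → Valid F A) := by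
  have compl : (∀ (W : Type) (F : MNFrame W), Finite W → F.IsTransitive → F.IsMNP → Valid F A) →
      MNPF A := by
    intro h
    by_contra h0
    exact Stmt9Aux.completeness h0 h
  constructor
  · exact ⟨fun h => Stmt9Aux.soundness h,
      fun h => compl (fun W F _ ht hp => h W F ht hp)⟩
  · exact ⟨fun h W F _ ht hp => Stmt9Aux.soundness h W F ht hp, compl⟩
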